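/- The (2,2)-3SAT formula φ is satisfiable if and only if the following modified instance admits a feasible matching. -/

import Mathlib

open scoped Classical

noncomputable section

/-- An SMTI-Diverse instance: students `S`, colleges `C`, types `T`.
Preferences are encoded by rank functions (smaller rank = more preferred);
ties are allowed.  `acc` is the (symmetric) acceptability relation, `tau`
the 0/1 type vectors (encoded as `Bool`), `lq`/`uq` the lower/upper quota
vectors and `cap` the capacities. -/
structure SMTI (S C T : Type) [Fintype S] [Fintype C] [Fintype T] where
  acc : S → C → Prop
  tau : S → T → Bool
  rankS : S → C → ℕ
  rankC : C → S → ℕ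
  lq : C → T → ℕ
  uq : C → T → ℕ
  cap : C → ℕ

namespace SMTI

variable {S C T : Type} [Fintype S] [Fintype C] [Fintype T]

/-- `f : S → Option C` encodes a matching: every assigned college is acceptable. -/
def IsMatching (I : SMTI S C T) (f : S → Option C) : Prop :=
  ∀ u w, f u = some w → I.acc u w

/-- The set `M(w)` of students assigned to college `w`. -/
def assigned (I : SMTI S C T) (f : S → Option C) (w : C) : Finset S :=
  Finset.univ.filter fun u => f u = some w

/-- The number of students of type `z` assigned to `w`. -/
def typeLoad (I : SMTI S C T) (f : S → Option C) (w : C) (z : T) : ℕ :=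
  ∑ u ∈ I.assigned f w, (I.tau u z).toNat

/-- Feasibility: capacities respected and quotas met at all colleges. -/
def Feasible (I : SMTI S C T) (f : S → Option C) : Prop :=
  ∀ w, (I.assigned f w).card ≤ I.cap w ∧
    ∀ z, I.lq w z ≤ I.typeLoad f w z ∧ I.typeLoad f w z ≤ I.uq w z

/-- `u` strictly prefers `w` to its assigned college (in particular if unmatched). -/
def PrefersTo (I : SMTI S C T) (f : S → Option C) (u : S) (w : C) : Prop :=
  ∀ w', f u = some w' → I.rankS u w < I.rankS u w'

/-- `{u,w}` is a blocking pair of `f` witnessed by `U' ⊆ M(w)`. -/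
def BlocksWith (I : SMTI S C T) (f : S → Option C) (u : S) (w : C) (U' : Finset S) : Prop :=
  f u ≠ some w ∧ I.acc u w ∧ I.PrefersTo f u w ∧
  U' ⊆ I.assigned f w ∧
  (∀ u' ∈ U', I.rankC w u < I.rankC w u') ∧
  (I.assigned f w \ U').card + 1 ≤ I.cap w ∧
  ∀ z, I.lq w z ≤ (I.tau u z).toNat + ∑ u' ∈ I.assigned f w \ U', (I.tau u' z).toNat ∧
    (I.tau u z).toNat + ∑ u' ∈ I.assigned f w \ U', (I.tau u' z).toNat ≤ I.uq w z

/-- `{u,w}` is a blocking pair of `f` (with some witness). -/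
def BlockingPair (I : SMTI S C T) (f : S → Option C) (u : S) (w : C) : Prop :=
  ∃ U', I.BlocksWith f u w U'

/-- Stability: no blocking pair at all. -/
def Stable (I : SMTI S C T) (f : S → Option C) : Prop :=
  ∀ u w, ¬ I.BlockingPair f u w

end SMTI

section Mod223SAT

/-- Students of the modified construction: for each variable `i`, the variable
students `x_i = (i, Sum.inl 0)`, `y_i = (i, Sum.inl 1)` and the literal students
`u_i^z = (i, Sum.inr (true, z))`, `v_i^z = (i, Sum.inr (false, z))` (`z ∈ Fin 2`). -/
abbrev MSt (r : ℕ) := Fin r × (Fin 2 ⊕ Bool × Fin 2)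

/-- Colleges of the modified construction: variable colleges
`w_i = Sum.inl (i, 0)`, `p_i = Sum.inl (i, 1)` and clause colleges
`c_j = Sum.inr j`. -/
abbrev MCo (r s : ℕ) := (Fin r × Fin 2) ⊕ Fin s

/-- The modified (feasibility-only) instance built from a (2,2)-3SAT formula;
`occ` assigns to each literal `(pol, i)` and each `z ∈ Fin 2` the slot
(clause, position) of the `z`-th occurrence of that literal, bijectively. -/
def MInst (r s : ℕ) (occ : Bool × Fin r × Fin 2 ≃ Fin s × Fin 3) :
    SMTI (MSt r) (MCo r s) (Fin 3) where
  acc := fun st c =>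
    match st with
    | (i, Sum.inl _) => c = Sum.inl (i, 0) ∨ c = Sum.inl (i, 1)
    | (i, Sum.inr (pol, z)) =>
        c = Sum.inl (i, if pol then 0 else 1) ∨ c = Sum.inr (occ (pol, i, z)).1
  tau := fun st z =>
    match st with
    | (_, Sum.inl k) => if k = 0 then decide (z ≠ 1) else decide (z ≠ 0)
    | (_, Sum.inr (_, zz)) => if zz = 0 then true else decide (z = 2)
  rankS := fun _ _ => 0
  rankC := fun _ _ => 0
  lq := fun c z =>
    match c with
    | Sum.inl _ => if z = 2 then 2 else 1
    | Sum.inr _ => if z = 2 then 1 else 0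
  uq := fun c z =>
    match c with
    | Sum.inl _ => if z = 2 then 2 else 1
    | Sum.inr _ => 1
  cap := fun c =>
    match c with
    | Sum.inl _ => 2
    | Sum.inr _ => 1

end Mod223SAT

theorem SMTI.mem_assigned {S C T : Type} [Fintype S] [Fintype C] [Fintype T]
    (I : SMTI S C T) (f : S → Option C) (w : C) (u : S) :
    u ∈ I.assigned f w ↔ f u = some w := by
  unfold SMTI.assigned
  rw [Finset.mem_filter]
  simp

section Aux

variable {r s : ℕ}

/-- The matching built from a satisfying assignment `σ` and a choice `k` of a
satisfied slot in each clause. -/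
def fwdF (occ : Bool × Fin r × Fin 2 ≃ Fin s × Fin 3)
    (σ : Fin r → Bool) (k : Fin s → Fin 3) : MSt r → Option (MCo r s) :=
  fun st => match st with
  | (i, Sum.inl _) => some (Sum.inl (i, if σ i then 0 else 1))
  | (i, Sum.inr (pol, z)) =>
      if σ i = pol then
        (if (occ (pol, i, z)).2 = k (occ (pol, i, z)).1
          then some (Sum.inr (occ (pol, i, z)).1) else none)
      else some (Sum.inl (i, if pol then 0 else 1))

end Aux

/-- A (2,2)-3SAT formula (encoded by the bijection `occ` between
literal occurrences and clause slots, with `cl` giving the literal in each slot) is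
satisfiable iff the modified instance admits a feasible matching. -/
theorem stmt10 (r s : ℕ) (cl : Fin s → Fin 3 → Bool × Fin r)
    (occ : Bool × Fin r × Fin 2 ≃ Fin s × Fin 3)
    (hocc : ∀ (pol : Bool) (i : Fin r) (z : Fin 2),
      cl (occ (pol, i, z)).1 (occ (pol, i, z)).2 = (pol, i)) :
    (∃ σ : Fin r → Bool, ∀ j : Fin s, ∃ z : Fin 3, σ (cl j z).2 = (cl j z).1) ↔
      ∃ f : MSt r → Option (MCo r s),
        (MInst r s occ).IsMatching f ∧ (MInst r s occ).Feasible f := by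
  constructor
  · rintro ⟨σ, hσ⟩
    choose k hk using hσ
    refine ⟨fwdF occ σ k, ?_, ?_⟩
    · -- matching
      rintro ⟨i, m | ⟨pol, z⟩⟩ w h
      · simp only [fwdF, Option.some.injEq] at h
        subst h
        by_cases hs : σ i <;> simp [MInst, hs]
      · simp only [fwdF] at h
        by_cases hs : σ i = pol
        · rw [if_pos hs] at h
          by_cases h2 : (occ (pol, i, z)).2 = k (occ (pol, i, z)).1
          · rw [if_pos h2, Option.some.injEq] at h
            subst h; simp [MInst]
          · rw [if_neg h2] at h; exact absurd h (by simp)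
        · rw [if_neg hs, Option.some.injEq] at h
          subst h; simp [MInst]
    · -- feasibility
      have hassign_l : ∀ (i : Fin r) (b : Fin 2),
          (MInst r s occ).assigned (fwdF occ σ k) (Sum.inl (i, b)) =
            if (if σ i then (0 : Fin 2) else 1) = b
            then {(i, Sum.inl 0), (i, Sum.inl 1)}
            else {(i, Sum.inr (decide (b = 0), 0)), (i, Sum.inr (decide (b = 0), 1))} := by
        intro i b
        ext ⟨i', m | ⟨pol', z'⟩⟩
        · rcases eq_or_ne i' i with rfl | hii
          · rcases Bool.eq_false_or_eq_true (σ i') with hs' | hs' <;>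
              fin_cases b <;> fin_cases m <;>
              simp [SMTI.mem_assigned, fwdF, hs', Prod.ext_iff]
          · simp only [SMTI.mem_assigned, Finset.mem_filter, Finset.mem_univ, true_and, fwdF,
              Option.some.injEq, Sum.inl.injEq, Prod.mk.injEq, hii, false_and, false_iff]
            split_ifs <;> simp [hii]
        · rcases eq_or_ne i' i with rfl | hii
          · rcases Bool.eq_false_or_eq_true (σ i') with hs' | hs' <;>
              cases pol' <;> fin_cases b <;> fin_cases z' <;>
              simp [SMTI.mem_assigned, fwdF, hs', Prod.ext_iff, ite_eq_iff]
          · simp only [SMTI.mem_assigned, Finset.mem_filter, Finset.mem_univ, true_and, fwdF,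
              ite_eq_iff, Option.some.injEq, Sum.inl.injEq, Sum.inr.injEq, Prod.mk.injEq,
              reduceCtorEq, hii, false_and, and_false, or_false, false_or, false_iff, not_or,
              iff_false]
            split_ifs <;> simp [hii]
      have hassign_r : ∀ (j : Fin s),
          (MInst r s occ).assigned (fwdF occ σ k) (Sum.inr j) =
            {((occ.symm (j, k j)).2.1, Sum.inr ((occ.symm (j, k j)).1, (occ.symm (j, k j)).2.2))} := by
        intro j
        have hX : occ ((occ.symm (j, k j)).1, (occ.symm (j, k j)).2.1, (occ.symm (j, k j)).2.2)
            = (j, k j) := by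
          rw [show ((occ.symm (j, k j)).1, (occ.symm (j, k j)).2.1, (occ.symm (j, k j)).2.2)
              = occ.symm (j, k j) from rfl, Equiv.apply_symm_apply]
        have hσX : σ (occ.symm (j, k j)).2.1 = (occ.symm (j, k j)).1 := by
          have h1 := hocc (occ.symm (j, k j)).1 (occ.symm (j, k j)).2.1 (occ.symm (j, k j)).2.2
          rw [hX] at h1
          have h2 := hk j
          rw [h1] at h2
          exact h2
        ext ⟨i', m | ⟨pol', z'⟩⟩
        · simp [SMTI.mem_assigned, fwdF, Prod.ext_iff]
        · simp only [SMTI.mem_assigned, Finset.mem_filter, Finset.mem_univ, true_and, fwdF,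
            Finset.mem_singleton, Prod.mk.injEq, Sum.inr.injEq]
          constructor
          · intro h
            by_cases hsp : σ i' = pol'
            · rw [if_pos hsp] at h
              by_cases h2 : (occ (pol', i', z')).2 = k (occ (pol', i', z')).1
              · rw [if_pos h2, Option.some.injEq, Sum.inr.injEq] at h
                have hocceq : occ (pol', i', z') = (j, k j) :=
                  Prod.ext h (by rw [h2, h])
                have hsymm : (pol', i', z') = occ.symm (j, k j) := by
                  rw [← hocceq, Equiv.symm_apply_apply]
                rw [← hsymm]
                exact ⟨rfl, rfl, rfl⟩
              · rw [if_neg h2] at h; exact absurd h (by simp)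
            · rw [if_neg hsp, Option.some.injEq] at h; exact absurd h (by simp)
          · rintro ⟨h1, h2, h3⟩
            subst h1; subst h2; subst h3
            rw [if_pos hσX, hX]
            simp
      rintro (⟨i, b⟩ | j)
      · refine ⟨?_, fun z => ?_⟩
        · rw [hassign_l i b]
          split_ifs <;> simp [MInst, Finset.card_insert_of_notMem]
        · rw [SMTI.typeLoad, hassign_l i b]
          by_cases hc : (if σ i then (0 : Fin 2) else 1) = b
          · rw [if_pos hc, Finset.sum_pair (by simp)]
            fin_cases z <;> simp [MInst]
          · rw [if_neg hc, Finset.sum_pair (by simp)]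
            fin_cases z <;> simp [MInst]
      · refine ⟨?_, fun z => ?_⟩
        · rw [hassign_r j]; simp [MInst]
        · rw [SMTI.typeLoad, hassign_r j, Finset.sum_singleton]
          by_cases hz : (occ.symm (j, k j)).2.2 = 0 <;>
            fin_cases z <;> simp [MInst, hz]
  · rintro ⟨f, hm, hf⟩
    have key : ∀ (i : Fin r) (pol : Bool) (z : Fin 2) (j : Fin s),
        f (i, Sum.inr (pol, z)) = some (Sum.inr j) →
        f (i, Sum.inl 0) = some (Sum.inl (i, if pol then 0 else 1)) := by
      intro i pol z j hfz
      set w : MCo r s := Sum.inl (i, if pol then 0 else 1) with hw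
      set A := (MInst r s occ).assigned f w with hA
      have hsub : A ⊆ {(i, Sum.inl 0), (i, Sum.inl 1), (i, Sum.inr (pol, 0)),
          (i, Sum.inr (pol, 1))} := by
        intro u hu
        have hfu : f u = some w := by simpa [hA, SMTI.mem_assigned] using hu
        have hacc := hm u w hfu
        obtain ⟨i', m | ⟨pol', z'⟩⟩ := u
        · simp only [MInst, hw] at hacc
          have hi : i' = i := by
            rcases hacc with h | h <;>
              · simp only [Sum.inl.injEq, Prod.mk.injEq] at h
                exact h.1.symm
          subst hi
          fin_cases m <;> simp
        · simp only [MInst, hw] at hacc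
          rcases hacc with h | h
          · simp only [Sum.inl.injEq, Prod.mk.injEq] at h
            obtain ⟨hi, hb⟩ := h
            subst hi
            have hp : pol' = pol := by
              cases pol <;> cases pol' <;> simp_all
            subst hp
            fin_cases z' <;> simp
          · exact absurd h (by simp)
      have hsum : ∀ t : Fin 3, (MInst r s occ).typeLoad f w t =
          (if (i, Sum.inl 0) ∈ A then ((MInst r s occ).tau (i, Sum.inl 0) t).toNat else 0) +
          ((if (i, Sum.inl 1) ∈ A then ((MInst r s occ).tau (i, Sum.inl 1) t).toNat else 0) +
          ((if (i, Sum.inr (pol, 0)) ∈ A then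
              ((MInst r s occ).tau (i, Sum.inr (pol, 0)) t).toNat else 0) +
          (if (i, Sum.inr (pol, 1)) ∈ A then
              ((MInst r s occ).tau (i, Sum.inr (pol, 1)) t).toNat else 0))) := by
        intro t
        rw [SMTI.typeLoad, ← hA]
        rw [show (∑ u ∈ A, ((MInst r s occ).tau u t).toNat)
            = ∑ u ∈ A, (if u ∈ A then ((MInst r s occ).tau u t).toNat else 0) from
          Finset.sum_congr rfl fun u hu => (if_pos hu).symm]
        rw [Finset.sum_subset hsub (fun u _ hu => if_neg hu)]
        rw [Finset.sum_insert (by simp), Finset.sum_insert (by simp),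
          Finset.sum_insert (by simp), Finset.sum_singleton]
      have hst : (i, Sum.inr (pol, z)) ∉ A := by
        simp [hA, SMTI.mem_assigned, hfz, hw]
      have h0 := (hf w).2 0
      have h1 := (hf w).2 1
      have h2 := (hf w).2 2
      rw [hsum 0] at h0
      rw [hsum 1] at h1
      rw [hsum 2] at h2
      simp only [MInst, hw] at h0 h1 h2
      have hx0 : (i, Sum.inl 0) ∈ A := by
        by_contra hx
        simp only [if_neg hx] at h0 h1 h2
        have hz : z = 0 ∨ z = 1 := by omega
        rcases hz with rfl | rfl <;>
          · simp only [if_neg hst] at h0 h1 h2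
            norm_num at h0 h1 h2
            split_ifs at h0 h1 h2 <;> simp_all <;> omega
      have : f (i, Sum.inl 0) = some w := by
        simpa [hA, SMTI.mem_assigned] using hx0
      rw [this, hw]
    refine ⟨fun i => decide (f (i, Sum.inl 0) = some (Sum.inl (i, 0))), fun j => ?_⟩
    -- clause college j has a student
    obtain ⟨u, hu⟩ : ∃ u, u ∈ (MInst r s occ).assigned f (Sum.inr j) := by
      have h2 := ((hf (Sum.inr j)).2 2).1
      by_contra hemp
      push_neg at hemp
      have : (MInst r s occ).assigned f (Sum.inr j) = ∅ := Finset.eq_empty_of_forall_notMem hemp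
      rw [SMTI.typeLoad, this] at h2
      simp [MInst] at h2
    have hfu : f u = some (Sum.inr j) := by
      simpa [SMTI.mem_assigned] using hu
    have hacc := hm u _ hfu
    obtain ⟨i, m | ⟨pol, z⟩⟩ := u
    · simp [MInst] at hacc
    · simp only [MInst] at hacc
      rcases hacc with hacc | hacc
      · simp at hacc
      · have hj : (occ (pol, i, z)).1 = j := by
          exact (Sum.inr.injEq _ _ ▸ hacc).symm ▸ rfl
        refine ⟨(occ (pol, i, z)).2, ?_⟩
        have hcl := hocc pol i z
        rw [hj] at hcl
        rw [hcl]
        have hx := key i pol z j hfu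
        cases pol <;> simp at hx ⊢ <;> simp [hx]
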